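/- Let v₁,…,vₙ (n ≥ 4) be the vertices of a convex polygon at height one in ℝ³ in counterclockwise order, and φ* the critical point of F_P on Γₙ = {φ ∈ ℝ≥0ⁿ : Σφⁱ = r}. Then φ*ˢ < r/3 strictly, for every s. -/

import Mathlib

/-- The determinant of the 3×3 matrix with columns `a`, `b`, `c`. -/
noncomputable def det3 (a b c : Fin 3 → ℝ) : ℝ :=
  Matrix.det (Matrix.of fun i j => ![a, b, c] j i)

section Aux

open Finset ContinuousLinearMap

lemma aux_term_deriv (n : ℕ) (c : ℝ) (i j k : Fin n) (x : Fin n → ℝ) :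
    HasFDerivAt (fun φ : Fin n → ℝ => c * φ i * φ j * φ k)
      ((c * x i * x j) • (proj k : (Fin n → ℝ) →L[ℝ] ℝ)
        + x k • ((c * x i) • (proj j : (Fin n → ℝ) →L[ℝ] ℝ)
          + x j • (c • (proj i : (Fin n → ℝ) →L[ℝ] ℝ)))) x := by
  have hi := hasFDerivAt_apply (𝕜 := ℝ) i x
  have hj := hasFDerivAt_apply (𝕜 := ℝ) j x
  have hk := hasFDerivAt_apply (𝕜 := ℝ) k x
  exact ((hi.const_mul c).mul hj).mul hk

lemma aux_F_deriv (n : ℕ) (D : Fin n → Fin n → Fin n → ℝ) (x : Fin n → ℝ) (s : Fin n) :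
    fderiv ℝ (fun φ : Fin n → ℝ => ∑ i, ∑ j ∈ Finset.Ioi i, ∑ k ∈ Finset.Ioi j,
        D i j k * φ i * φ j * φ k) x (Pi.single s 1)
    = ∑ i, ∑ j ∈ Finset.Ioi i, ∑ k ∈ Finset.Ioi j,
        ((D i j k * x i * x j) * (if k = s then (1:ℝ) else 0)
          + x k * ((D i j k * x i) * (if j = s then 1 else 0)
            + x j * (D i j k * (if i = s then 1 else 0)))) := by
  have h : HasFDerivAt (fun φ : Fin n → ℝ => ∑ i, ∑ j ∈ Finset.Ioi i, ∑ k ∈ Finset.Ioi j,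
        D i j k * φ i * φ j * φ k)
      (∑ i, ∑ j ∈ Finset.Ioi i, ∑ k ∈ Finset.Ioi j,
        ((D i j k * x i * x j) • (proj k : (Fin n → ℝ) →L[ℝ] ℝ)
          + x k • ((D i j k * x i) • (proj j : (Fin n → ℝ) →L[ℝ] ℝ)
            + x j • (D i j k • (proj i : (Fin n → ℝ) →L[ℝ] ℝ))))) x :=
    HasFDerivAt.fun_sum fun i _ => HasFDerivAt.fun_sum fun j _ => HasFDerivAt.fun_sum fun k _ =>
      aux_term_deriv n (D i j k) i j k x
  rw [h.fderiv]
  simp [ContinuousLinearMap.sum_apply, ContinuousLinearMap.smul_apply,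
    ContinuousLinearMap.add_apply, ContinuousLinearMap.proj_apply, smul_eq_mul,
    Pi.single_apply, mul_add, mul_ite, mul_zero]

lemma aux_sum3_pos (n : ℕ) (f : Fin n → Fin n → Fin n → ℝ)
    (hnn : ∀ i j k : Fin n, i < j → j < k → 0 ≤ f i j k)
    (a b c : Fin n) (hab : a < b) (hbc : b < c) (hf : 0 < f a b c) :
    0 < ∑ i, ∑ j ∈ Finset.Ioi i, ∑ k ∈ Finset.Ioi j, f i j k := by
  refine Finset.sum_pos' (fun i _ => Finset.sum_nonneg fun j hj => Finset.sum_nonneg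
    fun k hk => hnn i j k (Finset.mem_Ioi.1 hj) (Finset.mem_Ioi.1 hk))
    ⟨a, Finset.mem_univ a, ?_⟩
  refine Finset.sum_pos' (fun j hj => Finset.sum_nonneg fun k hk =>
    hnn a j k (Finset.mem_Ioi.1 hj) (Finset.mem_Ioi.1 hk))
    ⟨b, Finset.mem_Ioi.2 hab, ?_⟩
  exact Finset.sum_pos' (fun k hk => hnn a b k hab (Finset.mem_Ioi.1 hk))
    ⟨c, Finset.mem_Ioi.2 hbc, hf⟩

lemma aux_swap_sum (n : ℕ) (g : Fin n → Fin n → Fin n → Fin n → ℝ) :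
    ∑ t, ∑ i, ∑ j ∈ Finset.Ioi i, ∑ k ∈ Finset.Ioi j, g t i j k
    = ∑ i, ∑ j ∈ Finset.Ioi i, ∑ k ∈ Finset.Ioi j, ∑ t, g t i j k := by
  rw [Finset.sum_comm]
  refine Finset.sum_congr rfl fun i _ => ?_
  rw [Finset.sum_comm]
  exact Finset.sum_congr rfl fun j _ => Finset.sum_comm

end Aux

/-- For a convex polygon with `n ≥ 4` vertices at height one
(counterclockwise), the critical point `φ*` of `F_P` on `Γₙ` satisfies the
strict bound `φ*ˢ < r/3` for every `s`. -/
theorem critical_point_strict_bound (n : ℕ) (hn : 4 ≤ n)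
    (v : Fin n → (Fin 3 → ℝ)) (hheight : ∀ i, v i 2 = 1)
    (hccw : ∀ i j k : Fin n, i < j → j < k → 0 < det3 (v i) (v j) (v k))
    (r : ℝ) (hr : 0 < r)
    (F : (Fin n → ℝ) → ℝ)
    (hF : F = fun φ => ∑ i, ∑ j ∈ Finset.Ioi i, ∑ k ∈ Finset.Ioi j,
      det3 (v i) (v j) (v k) * φ i * φ j * φ k)
    (φs : Fin n → ℝ) (hpos : ∀ i, 0 < φs i) (hsum : ∑ i, φs i = r)
    (hcrit : ∃ lam : ℝ, ∀ s, fderiv ℝ F φs (Pi.single s 1) = lam) :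
    ∀ s : Fin n, φs s < r / 3 := by
  obtain ⟨lam, hlam⟩ := hcrit
  subst hF
  set D : Fin n → Fin n → Fin n → ℝ := fun i j k => det3 (v i) (v j) (v k) with hD
  -- the partial derivatives all equal lam
  have hd : ∀ t : Fin n, (∑ i, ∑ j ∈ Finset.Ioi i, ∑ k ∈ Finset.Ioi j,
      ((D i j k * φs i * φs j) * (if k = t then (1:ℝ) else 0)
        + φs k * ((D i j k * φs i) * (if j = t then 1 else 0)
          + φs j * (D i j k * (if i = t then 1 else 0))))) = lam := fun t =>
    (aux_F_deriv n D φs t).symm.trans (hlam t)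
  -- key identity: φs t * lam = sum over triples containing t
  have hA : ∀ t : Fin n, φs t * lam = ∑ i, ∑ j ∈ Finset.Ioi i, ∑ k ∈ Finset.Ioi j,
      (D i j k * φs i * φs j * φs k) *
        ((if i = t then (1:ℝ) else 0) + (if j = t then 1 else 0)
          + (if k = t then 1 else 0)) := by
    intro t
    rw [← hd t, Finset.mul_sum]
    refine Finset.sum_congr rfl fun i _ => ?_
    rw [Finset.mul_sum]
    refine Finset.sum_congr rfl fun j hj => ?_
    rw [Finset.mul_sum]
    refine Finset.sum_congr rfl fun k hk => ?_
    have hij : i < j := Finset.mem_Ioi.1 hj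
    have hjk : j < k := Finset.mem_Ioi.1 hk
    rcases eq_or_ne i t with rfl | hi
    · simp [hij.ne', (hij.trans hjk).ne']
      ring
    · rcases eq_or_ne j t with rfl | hj'
      · simp [hi, hjk.ne']
        ring
      · rcases eq_or_ne k t with rfl | hk'
        · simp [hi, hj']
          ring
        · simp [hi, hj', hk']
  -- Euler identity: r * lam = 3 * F φs
  have hEuler : r * lam = 3 * (∑ i, ∑ j ∈ Finset.Ioi i, ∑ k ∈ Finset.Ioi j,
      D i j k * φs i * φs j * φs k) := by
    have h1 : ∑ t, φs t * lam = r * lam := by rw [← Finset.sum_mul, hsum]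
    rw [← h1]
    have h2 : ∑ t, φs t * lam = ∑ t, ∑ i, ∑ j ∈ Finset.Ioi i, ∑ k ∈ Finset.Ioi j,
        (D i j k * φs i * φs j * φs k) *
          ((if i = t then (1:ℝ) else 0) + (if j = t then 1 else 0)
            + (if k = t then 1 else 0)) :=
      Finset.sum_congr rfl fun t _ => hA t
    rw [h2, aux_swap_sum, Finset.mul_sum]
    refine Finset.sum_congr rfl fun i _ => ?_
    rw [Finset.mul_sum]
    refine Finset.sum_congr rfl fun j _ => ?_
    rw [Finset.mul_sum]
    refine Finset.sum_congr rfl fun k _ => ?_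
    rw [← Finset.mul_sum]
    rw [Finset.sum_add_distrib, Finset.sum_add_distrib]
    simp [Finset.sum_ite_eq]
    ring
  -- F φs > 0
  have hFpos : 0 < ∑ i, ∑ j ∈ Finset.Ioi i, ∑ k ∈ Finset.Ioi j,
      D i j k * φs i * φs j * φs k := by
    refine aux_sum3_pos n _ (fun i j k hij hjk => le_of_lt ?_)
      ⟨0, by omega⟩ ⟨1, by omega⟩ ⟨2, by omega⟩ (by simp [Fin.lt_def]) (by simp [Fin.lt_def]) ?_
    · exact mul_pos (mul_pos (mul_pos (hccw i j k hij hjk) (hpos i)) (hpos j)) (hpos k)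
    · exact mul_pos (mul_pos (mul_pos (hccw _ _ _ (by simp [Fin.lt_def]) (by simp [Fin.lt_def]))
        (hpos _)) (hpos _)) (hpos _)
  have hlampos : 0 < lam := by nlinarith
  intro s
  -- the triple avoiding s
  let a : Fin n := ⟨if s.val = 0 then 1 else 0, by split_ifs <;> omega⟩
  let b : Fin n := ⟨if s.val ≤ 1 then 2 else 1, by split_ifs <;> omega⟩
  let c : Fin n := ⟨if s.val ≤ 2 then 3 else 2, by split_ifs <;> omega⟩
  have hab : a < b := by simp only [a, b, Fin.lt_def]; split_ifs <;> omega
  have hbc : b < c := by simp only [b, c, Fin.lt_def]; split_ifs <;> omega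
  have ha : a ≠ s := by
    have : a.val ≠ s.val := by simp only [a]; split_ifs <;> omega
    exact fun h => this (congrArg Fin.val h)
  have hb : b ≠ s := by
    have : b.val ≠ s.val := by simp only [b]; split_ifs <;> omega
    exact fun h => this (congrArg Fin.val h)
  have hc : c ≠ s := by
    have : c.val ≠ s.val := by simp only [c]; split_ifs <;> omega
    exact fun h => this (congrArg Fin.val h)
  -- the remainder R = F - φs s * lam is positive
  have hB : (∑ i, ∑ j ∈ Finset.Ioi i, ∑ k ∈ Finset.Ioi j, D i j k * φs i * φs j * φs k)
      - φs s * lam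
      = ∑ i, ∑ j ∈ Finset.Ioi i, ∑ k ∈ Finset.Ioi j,
        (D i j k * φs i * φs j * φs k
          - (D i j k * φs i * φs j * φs k) *
            ((if i = s then (1:ℝ) else 0) + (if j = s then 1 else 0)
              + (if k = s then 1 else 0))) := by
    rw [hA s]
    simp only [Finset.sum_sub_distrib]
  have hRpos : 0 < (∑ i, ∑ j ∈ Finset.Ioi i, ∑ k ∈ Finset.Ioi j, D i j k * φs i * φs j * φs k)
      - φs s * lam := by
    rw [hB]
    refine aux_sum3_pos n _ ?_ a b c hab hbc ?_
    · intro i j k hij hjk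
      have hT : 0 < D i j k * φs i * φs j * φs k :=
        mul_pos (mul_pos (mul_pos (hccw i j k hij hjk) (hpos i)) (hpos j)) (hpos k)
      rcases eq_or_ne i s with rfl | hi
      · simp [hij.ne', (hij.trans hjk).ne']
      · rcases eq_or_ne j s with rfl | hj'
        · simp [hi, hjk.ne']
        · rcases eq_or_ne k s with rfl | hk'
          · simp [hi, hj']
          · simp [hi, hj', hk']
            positivity
    · have hT : 0 < D a b c * φs a * φs b * φs c :=
        mul_pos (mul_pos (mul_pos (hccw a b c hab hbc) (hpos a)) (hpos b)) (hpos c)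
      simpa [ha, hb, hc] using hT
  nlinarith
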